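/- Let B be a 2-wise packing on [n] and for each k let b_k be the number of blocks of B of cardinality k. Suppose m is the maximum cardinality of a block, i.e., b_m > 0 and b_k = 0 for m < k ≤ n. Then Σ_{2 ≤ k ≤ m} binom(k−1,2)·b_k ≤ binom(n−m,2) + binom(m−1,2). -/

import Mathlib

/-- For a 2-wise packing on `[n]` with maximum block size `m`,
Σ_{2 ≤ k ≤ m} C(k−1,2)·b_k ≤ C(n−m,2) + C(m−1,2). -/
theorem packing_non_pair_count (n m : ℕ) (B : Finset (Finset (Fin n)))
    (hcard : ∀ K ∈ B, 2 ≤ K.card)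
    (hpack : ∀ T : Finset (Fin n), T.card = 2 →
      ∀ K ∈ B, ∀ K' ∈ B, T ⊆ K → T ⊆ K' → K = K')
    (hm : 0 < (B.filter (fun K => K.card = m)).card)
    (hmax : ∀ k, m < k → k ≤ n → (B.filter (fun K => K.card = k)).card = 0) :
    ∑ k ∈ Finset.Icc 2 m, (k - 1).choose 2 * (B.filter (fun K => K.card = k)).card ≤
      (n - m).choose 2 + (m - 1).choose 2 := by
  obtain ⟨M, hM⟩ := Finset.card_pos.mp hm
  rw [Finset.mem_filter] at hM
  obtain ⟨hMB, hMm⟩ := hM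
  have hle : ∀ K ∈ B, K.card ≤ m := by
    intro K hK
    by_contra h
    push_neg at h
    have hKn : K.card ≤ n := by
      simpa using Finset.card_le_card (Finset.subset_univ K)
    have h0 := hmax K.card h hKn
    rw [Finset.card_eq_zero] at h0
    have hmem : K ∈ B.filter (fun K' => K'.card = K.card) :=
      Finset.mem_filter.mpr ⟨hK, rfl⟩
    rw [h0] at hmem
    exact absurd hmem (Finset.notMem_empty K)
  have hsum : ∑ k ∈ Finset.Icc 2 m, (k - 1).choose 2 * (B.filter (fun K => K.card = k)).card
      = ∑ K ∈ B, (K.card - 1).choose 2 := by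
    rw [← Finset.sum_fiberwise_of_maps_to (g := Finset.card) (t := Finset.Icc 2 m)
      (fun K hK => Finset.mem_Icc.mpr ⟨hcard K hK, hle K hK⟩) (fun K => (K.card - 1).choose 2)]
    apply Finset.sum_congr rfl
    intro k _
    rw [Finset.sum_congr rfl (fun K hK => by rw [(Finset.mem_filter.mp hK).2]),
      Finset.sum_const, smul_eq_mul, mul_comm]
  rw [hsum, ← Finset.add_sum_erase B _ hMB, hMm, add_comm ((n-m).choose 2)]
  apply add_le_add_right
  have hstep : ∀ K ∈ B.erase M, (K.card - 1).choose 2 ≤ ((K \ M).card).choose 2 := by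
    intro K hK
    apply Nat.choose_le_choose
    have hint : (K ∩ M).card ≤ 1 := by
      by_contra h
      push_neg at h
      obtain ⟨T, hT, hT2⟩ := Finset.exists_subset_card_eq h
      exact (Finset.mem_erase.mp hK).1
        (hpack T hT2 K (Finset.mem_of_mem_erase hK) M hMB
          (hT.trans Finset.inter_subset_left) (hT.trans Finset.inter_subset_right))
    have := Finset.card_sdiff_add_card_inter K M
    omega
  calc ∑ K ∈ B.erase M, (K.card - 1).choose 2
      ≤ ∑ K ∈ B.erase M, ((K \ M).powersetCard 2).card := by
        apply Finset.sum_le_sum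
        intro K hK
        rw [Finset.card_powersetCard]
        exact hstep K hK
    _ = ((B.erase M).biUnion (fun K => (K \ M).powersetCard 2)).card := by
        refine (Finset.card_biUnion ?_).symm
        intro K hK K' hK' hne
        rw [Function.onFun, Finset.disjoint_left]
        intro T hT hT'
        rw [Finset.mem_powersetCard] at hT hT'
        exact hne (hpack T hT.2 K (Finset.mem_of_mem_erase hK) K' (Finset.mem_of_mem_erase hK')
          (hT.1.trans Finset.sdiff_subset) (hT'.1.trans Finset.sdiff_subset))
    _ ≤ ((Finset.univ \ M).powersetCard 2).card := by
        apply Finset.card_le_card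
        intro T hT
        rw [Finset.mem_biUnion] at hT
        obtain ⟨K, _, hT⟩ := hT
        rw [Finset.mem_powersetCard] at hT ⊢
        exact ⟨hT.1.trans (Finset.sdiff_subset_sdiff (Finset.subset_univ K) le_rfl), hT.2⟩
    _ = (n - m).choose 2 := by
        rw [Finset.card_powersetCard, Finset.card_sdiff_of_subset (Finset.subset_univ M),
          Finset.card_univ, Fintype.card_fin, hMm]
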